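/- Let (Ω, 𝒜, P) be a probability space, let d, M ≥ 1, τ ≥ 1, μ > 0, G ≥ 0, 0 < η ≤ 1, and let w_1, …, w_M be nonnegative reals with Σ_m w_m = 1. Let F_m : ℝ^d → ℝ and G_m : ℝ^d → ℝ^d satisfy the μ-strong-convexity inequality 2(F_m(v) − F_m(w)) ≥ 2⟨v − w, G_m(w)⟩ + μ‖v − w‖² for all v, w ∈ ℝ^d and all m; set F = Σ_m w_m F_m, let θ* be a global minimizer of F with F* = F(θ*), suppose F_m* ≤ F_m(v) for all v and m, and set Γ = F* − Σ_m w_m F_m*. Let θ̂ : Ω → ℝ^d and g_{m,i} : Ω → ℝ^d (i ∈ {1,…,τ}) be random vectors (all integrands appearing below integrable) with E[‖g_{m,i}‖²] ≤ G², define the local iterates θ_m^i = θ̂ − η Σ_{j=1}^{i−1} g_{m,j} (so θ_m^1 = θ̂), assume the unbiasedness identities E[⟨θ* − θ_m^i, g_{m,i}⟩] = E[⟨θ* − θ_m^i, G_m(θ_m^i)⟩] for all m and all i ∈ {1,…,τ}, and define the new global model θ⁺ = θ̂ − η Σ_{m=1}^M w_m Σ_{i=1}^τ g_{m,i}. Then: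 E[‖θ⁺ − θ*‖²] ≤ (1 − μη(τ − η(τ − 1))) · E[‖θ̂ − θ*‖²] + η²(τ² + τ − 1)G² + (1 + μ(1 − η)) η² G² τ(τ−1)(2τ−1)/6 + 2η(τ − 1)Γ. -/

import Mathlib

open MeasureTheory Finset
open scoped InnerProductSpace

lemma aux_norm_sum_sq_le {ι E : Type*} [NormedAddCommGroup E] [InnerProductSpace ℝ E]
    (s : Finset ι) (f : ι → E) :
    ‖∑ i ∈ s, f i‖ ^ 2 ≤ (s.card : ℝ) * ∑ i ∈ s, ‖f i‖ ^ 2 := by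
  calc ‖∑ i ∈ s, f i‖ ^ 2 ≤ (∑ i ∈ s, ‖f i‖) ^ 2 := by
        have h := norm_sum_le s f
        have h2 : (0:ℝ) ≤ ‖∑ i ∈ s, f i‖ := norm_nonneg _
        nlinarith
    _ ≤ (s.card : ℝ) * ∑ i ∈ s, ‖f i‖ ^ 2 := sq_sum_le_card_mul_sum_sq (f := fun i => ‖f i‖)

lemma aux_norm_wsum_sq_le {ι E : Type*} [NormedAddCommGroup E] [InnerProductSpace ℝ E]
    (s : Finset ι) (w : ι → ℝ) (hw : ∀ i ∈ s, 0 ≤ w i) (f : ι → E) :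
    ‖∑ i ∈ s, w i • f i‖ ^ 2 ≤ (∑ i ∈ s, w i) * ∑ i ∈ s, w i * ‖f i‖ ^ 2 := by
  have h1 : ‖∑ i ∈ s, w i • f i‖ ≤ ∑ i ∈ s, w i * ‖f i‖ := by
    refine (norm_sum_le _ _).trans_eq (Finset.sum_congr rfl fun i hi => ?_)
    rw [norm_smul, Real.norm_eq_abs, abs_of_nonneg (hw i hi)]
  have h2 : (∑ i ∈ s, w i * ‖f i‖) ^ 2 ≤ (∑ i ∈ s, w i) * ∑ i ∈ s, w i * ‖f i‖ ^ 2 := by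
    calc (∑ i ∈ s, w i * ‖f i‖) ^ 2
        = (∑ i ∈ s, Real.sqrt (w i) * (Real.sqrt (w i) * ‖f i‖)) ^ 2 := by
          congr 1
          refine Finset.sum_congr rfl fun i hi => ?_
          rw [← mul_assoc, Real.mul_self_sqrt (hw i hi)]
      _ ≤ (∑ i ∈ s, Real.sqrt (w i) ^ 2) * ∑ i ∈ s, (Real.sqrt (w i) * ‖f i‖) ^ 2 :=
          Finset.sum_mul_sq_le_sq_mul_sq s _ _
      _ = (∑ i ∈ s, w i) * ∑ i ∈ s, w i * ‖f i‖ ^ 2 := by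
          congr 1
          · exact Finset.sum_congr rfl fun i hi => Real.sq_sqrt (hw i hi)
          · refine Finset.sum_congr rfl fun i hi => ?_
            rw [mul_pow, Real.sq_sqrt (hw i hi)]
  have h3 : (0:ℝ) ≤ ∑ i ∈ s, w i * ‖f i‖ :=
    Finset.sum_nonneg fun i hi => mul_nonneg (hw i hi) (norm_nonneg _)
  nlinarith [norm_nonneg (∑ i ∈ s, w i • f i)]

lemma aux_sum_sq_Icc (n : ℕ) :
    ∑ i ∈ Icc 2 n, ((i:ℝ) - 1) ^ 2 = (n:ℝ) * ((n:ℝ) - 1) * (2 * (n:ℝ) - 1) / 6 := by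
  induction n with
  | zero => simp
  | succ n ih =>
    rcases Nat.lt_or_ge n 1 with h | h
    · interval_cases n
      simp
    · rw [Finset.sum_Icc_succ_top (by omega : 2 ≤ n + 1), ih]
      push_cast; ring

lemma aux_integrable_sq_norm {Ω : Type*} [MeasurableSpace Ω] {P : Measure Ω}
    {E : Type*} [NormedAddCommGroup E] {f : Ω → E} (hf : AEStronglyMeasurable f P)
    {bound : Ω → ℝ} (hb : Integrable bound P) (h : ∀ ω, ‖f ω‖ ^ 2 ≤ bound ω) :
    Integrable (fun ω => ‖f ω‖ ^ 2) P := by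
  refine hb.mono' (hf.norm.pow 2) ?_
  filter_upwards with ω
  rw [Real.norm_eq_abs, abs_of_nonneg (by positivity)]
  exact h ω

set_option maxHeartbeats 1000000 in
/-- one-step contraction bound for the global model update. -/
theorem stmt_16 {Ω : Type*} [MeasurableSpace Ω] (P : Measure Ω) [IsProbabilityMeasure P]
    (d M τ : ℕ) (hd : 1 ≤ d) (hM : 1 ≤ M) (hτ : 1 ≤ τ)
    (μ G η : ℝ) (hμ : 0 < μ) (hG : 0 ≤ G) (hη0 : 0 < η) (hη1 : η ≤ 1)
    (w : Fin M → ℝ) (hw : ∀ m, 0 ≤ w m) (hw1 : ∑ m, w m = 1)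
    (F : Fin M → EuclideanSpace ℝ (Fin d) → ℝ)
    (Gm : Fin M → EuclideanSpace ℝ (Fin d) → EuclideanSpace ℝ (Fin d))
    (hsc : ∀ m (v u : EuclideanSpace ℝ (Fin d)),
      2 * (F m v - F m u) ≥ 2 * ⟪v - u, Gm m u⟫_ℝ + μ * ‖v - u‖ ^ 2)
    (θstar : EuclideanSpace ℝ (Fin d))
    (hmin : ∀ v, ∑ m, w m * F m θstar ≤ ∑ m, w m * F m v)
    (Fmin : Fin M → ℝ) (hFmin : ∀ m v, Fmin m ≤ F m v)
    (Fstar Γ : ℝ) (hFstar : Fstar = ∑ m, w m * F m θstar)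
    (hΓ : Γ = Fstar - ∑ m, w m * Fmin m)
    (θh : Ω → EuclideanSpace ℝ (Fin d))
    (g : Fin M → ℕ → Ω → EuclideanSpace ℝ (Fin d))
    -- local SGD iterates: θ_m^i = θ̂ − η Σ_{j=1}^{i−1} g_{m,j} (so θ_m^1 = θ̂)
    (θloc : Fin M → ℕ → Ω → EuclideanSpace ℝ (Fin d))
    (hθloc : ∀ m i ω, θloc m i ω = θh ω - η • ∑ j ∈ Icc 1 (i - 1), g m j ω)
    -- new global model: θ⁺ = θ̂ − η Σ_m w_m Σ_{i=1}^τ g_{m,i}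
    (θplus : Ω → EuclideanSpace ℝ (Fin d))
    (hθplus : ∀ ω, θplus ω = θh ω - η • ∑ m, w m • ∑ i ∈ Icc 1 τ, g m i ω)
    -- integrability of all integrands appearing below
    (hθhint : Integrable θh P)
    (hgint : ∀ m, ∀ i ∈ Icc 1 τ, Integrable (fun ω => g m i ω) P)
    (hg2int : ∀ m, ∀ i ∈ Icc 1 τ, Integrable (fun ω => ‖g m i ω‖ ^ 2) P)
    (hθh2int : Integrable (fun ω => ‖θh ω - θstar‖ ^ 2) P)
    (hθplus2int : Integrable (fun ω => ‖θplus ω - θstar‖ ^ 2) P)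
    (hip0int : ∀ m, ∀ i ∈ Icc 1 τ,
      Integrable (fun ω => ⟪θstar - θh ω, g m i ω⟫_ℝ) P)
    (hip1int : ∀ m, ∀ i ∈ Icc 1 τ,
      Integrable (fun ω => ⟪θstar - θloc m i ω, g m i ω⟫_ℝ) P)
    (hip2int : ∀ m, ∀ i ∈ Icc 1 τ,
      Integrable (fun ω => ⟪θstar - θloc m i ω, Gm m (θloc m i ω)⟫_ℝ) P)
    (hloc2int : ∀ m, ∀ i ∈ Icc 1 τ,
      Integrable (fun ω => ‖θloc m i ω - θstar‖ ^ 2) P)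
    -- bounded second moments of the stochastic gradients
    (hgbound : ∀ m, ∀ i ∈ Icc 1 τ, ∫ ω, ‖g m i ω‖ ^ 2 ∂P ≤ G ^ 2)
    -- unbiasedness identities
    (hunbiased : ∀ m, ∀ i ∈ Icc 1 τ,
      ∫ ω, ⟪θstar - θloc m i ω, g m i ω⟫_ℝ ∂P
        = ∫ ω, ⟪θstar - θloc m i ω, Gm m (θloc m i ω)⟫_ℝ ∂P) :
    ∫ ω, ‖θplus ω - θstar‖ ^ 2 ∂P
      ≤ (1 - μ * η * ((τ : ℝ) - η * ((τ : ℝ) - 1))) * ∫ ω, ‖θh ω - θstar‖ ^ 2 ∂P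
        + η ^ 2 * ((τ : ℝ) ^ 2 + (τ : ℝ) - 1) * G ^ 2
        + (1 + μ * (1 - η)) * η ^ 2 * G ^ 2
            * ((τ : ℝ) * ((τ : ℝ) - 1) * (2 * (τ : ℝ) - 1) / 6)
        + 2 * η * ((τ : ℝ) - 1) * Γ := by
  -- notation
  have hη1' : (0:ℝ) ≤ 1 - η := by linarith
  have h1mem : 1 ∈ Icc 1 τ := by simp [mem_Icc]; omega
  have hloc1 : ∀ m ω, θloc m 1 ω = θh ω := by
    intro m ω; rw [hθloc]; simp
  set A := ∫ ω, ‖θh ω - θstar‖ ^ 2 ∂P with hA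
  -- S and b
  set S : Ω → EuclideanSpace ℝ (Fin d) := fun ω => ∑ m, w m • ∑ i ∈ Icc 1 τ, g m i ω with hS
  -- subset fact
  have hIccsub : ∀ i ∈ Icc 1 τ, ∀ j ∈ Icc 1 (i - 1), j ∈ Icc 1 τ := by
    intro i hi j hj
    simp only [mem_Icc] at *
    omega
  -- integrability of inner sums b m i = ∑_{j ∈ Icc 1 (i-1)} g m j
  have hbint : ∀ i ∈ Icc 1 τ, ∀ m, Integrable (fun ω => ∑ j ∈ Icc 1 (i-1), g m j ω) P := by
    intro i hi m
    exact integrable_finset_sum _ fun j hj => hgint m j (hIccsub i hi j hj)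
  have hb2int : ∀ i ∈ Icc 1 τ, ∀ m,
      Integrable (fun ω => ‖∑ j ∈ Icc 1 (i-1), g m j ω‖ ^ 2) P := by
    intro i hi m
    refine aux_integrable_sq_norm (hbint i hi m).aestronglyMeasurable
      (bound := fun ω => ((i:ℝ) - 1) * ∑ j ∈ Icc 1 (i-1), ‖g m j ω‖ ^ 2) ?_ ?_
    · exact (integrable_finset_sum _ fun j hj => hg2int m j (hIccsub i hi j hj)).const_mul _
    · intro ω
      have := aux_norm_sum_sq_le (Icc 1 (i-1)) (fun j => g m j ω)
      have hcard : ((Icc 1 (i-1)).card : ℝ) ≤ (i:ℝ) - 1 := by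
        have h1i : 1 ≤ i := (mem_Icc.mp hi).1
        rw [Nat.card_Icc]
        have he : i - 1 + 1 - 1 = i - 1 := by omega
        rw [he, Nat.cast_sub h1i]
        norm_num
      refine this.trans (mul_le_mul_of_nonneg_right hcard ?_)
      exact Finset.sum_nonneg fun j _ => by positivity
  -- ∫ ‖b m i‖² ≤ ((i:ℝ)-1)² G²
  have hbbound : ∀ i ∈ Icc 1 τ, ∀ m,
      ∫ ω, ‖∑ j ∈ Icc 1 (i-1), g m j ω‖ ^ 2 ∂P ≤ ((i:ℝ) - 1) ^ 2 * G ^ 2 := by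
    intro i hi m
    have h1i : 1 ≤ i := (mem_Icc.mp hi).1
    have hcard : ((Icc 1 (i-1)).card : ℝ) = (i:ℝ) - 1 := by
      rw [Nat.card_Icc]
      have he : i - 1 + 1 - 1 = i - 1 := by omega
      rw [he, Nat.cast_sub h1i]
      norm_num
    have hi1R : (0:ℝ) ≤ (i:ℝ) - 1 := by
      rw [← hcard]; positivity
    have hmono : ∫ ω, ‖∑ j ∈ Icc 1 (i-1), g m j ω‖ ^ 2 ∂P
        ≤ ∫ ω, ((i:ℝ)-1) * ∑ j ∈ Icc 1 (i-1), ‖g m j ω‖ ^ 2 ∂P := by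
      refine integral_mono (hb2int i hi m)
        ((integrable_finset_sum _ fun j hj => hg2int m j (hIccsub i hi j hj)).const_mul _)
        fun ω => ?_
      have h := aux_norm_sum_sq_le (Icc 1 (i-1)) (fun j => g m j ω)
      rwa [hcard] at h
    refine hmono.trans ?_
    rw [integral_const_mul, integral_finset_sum _ (fun j hj => hg2int m j (hIccsub i hi j hj))]
    have hsum : ∑ j ∈ Icc 1 (i-1), ∫ ω, ‖g m j ω‖ ^ 2 ∂P ≤ ((i:ℝ)-1) * G ^ 2 := by
      calc ∑ j ∈ Icc 1 (i-1), ∫ ω, ‖g m j ω‖ ^ 2 ∂P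
          ≤ ∑ _j ∈ Icc 1 (i-1), G ^ 2 :=
            Finset.sum_le_sum fun j hj => hgbound m j (hIccsub i hi j hj)
        _ = ((i:ℝ)-1) * G ^ 2 := by rw [Finset.sum_const, nsmul_eq_mul, hcard]
    calc ((i:ℝ)-1) * ∑ j ∈ Icc 1 (i-1), ∫ ω, ‖g m j ω‖ ^ 2 ∂P
        ≤ ((i:ℝ)-1) * (((i:ℝ)-1) * G ^ 2) := mul_le_mul_of_nonneg_left hsum hi1R
      _ = ((i:ℝ) - 1) ^ 2 * G ^ 2 := by ring
  -- integrability of ‖S‖²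
  have hcardτ : ((Icc 1 τ).card : ℝ) = (τ:ℝ) := by
    rw [Nat.card_Icc]
    norm_num
  have hSptw : ∀ ω, ‖S ω‖ ^ 2 ≤ ∑ m, w m * ((τ:ℝ) * ∑ i ∈ Icc 1 τ, ‖g m i ω‖ ^ 2) := by
    intro ω
    have h1 := aux_norm_wsum_sq_le univ w (fun m _ => hw m) (fun m => ∑ i ∈ Icc 1 τ, g m i ω)
    rw [hw1, one_mul] at h1
    refine h1.trans (Finset.sum_le_sum fun m _ => mul_le_mul_of_nonneg_left ?_ (hw m))
    have h2 := aux_norm_sum_sq_le (Icc 1 τ) (fun i => g m i ω)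
    rwa [hcardτ] at h2
  have hSbint : Integrable (fun ω => ∑ m, w m * ((τ:ℝ) * ∑ i ∈ Icc 1 τ, ‖g m i ω‖ ^ 2)) P :=
    integrable_finset_sum _ fun m _ =>
      (((integrable_finset_sum _ fun i hi => hg2int m i hi).const_mul _).const_mul _)
  have hS2int : Integrable (fun ω => ‖S ω‖ ^ 2) P := by
    refine aux_integrable_sq_norm ?_ hSbint hSptw
    exact (integrable_finset_sum _ fun m _ =>
      ((integrable_finset_sum _ fun i hi => hgint m i hi).smul (w m))).aestronglyMeasurable
  -- expansion of the integral
  have hIexp : ∫ ω, ‖θplus ω - θstar‖ ^ 2 ∂P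
      = A + 2 * η * (∑ m, w m * ∑ i ∈ Icc 1 τ, ∫ ω, ⟪θstar - θh ω, g m i ω⟫_ℝ ∂P)
        + η ^ 2 * ∫ ω, ‖S ω‖ ^ 2 ∂P := by
    have hpt : ∀ ω, ‖θplus ω - θstar‖ ^ 2
        = ‖θh ω - θstar‖ ^ 2
          + 2 * η * (∑ m, w m * ∑ i ∈ Icc 1 τ, ⟪θstar - θh ω, g m i ω⟫_ℝ)
          + η ^ 2 * ‖S ω‖ ^ 2 := by
      intro ω
      have hrw : θplus ω - θstar = (θh ω - θstar) - η • S ω := by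
        rw [hθplus, hS]; abel
      have hinner : ⟪θh ω - θstar, S ω⟫_ℝ
          = -(∑ m, w m * ∑ i ∈ Icc 1 τ, ⟪θstar - θh ω, g m i ω⟫_ℝ) := by
        rw [hS]
        simp only [inner_sum, real_inner_smul_right]
        rw [← Finset.sum_neg_distrib]
        refine Finset.sum_congr rfl fun m _ => ?_
        rw [← mul_neg, ← Finset.sum_neg_distrib]
        congr 1
        refine Finset.sum_congr rfl fun i _ => ?_
        rw [← inner_neg_left, neg_sub]
      rw [hrw, norm_sub_sq_real, real_inner_smul_right, hinner, norm_smul,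
        Real.norm_eq_abs, mul_pow, sq_abs]
      ring
    have hmid : ∀ m : Fin M,
        Integrable (fun ω => w m * ∑ i ∈ Icc 1 τ, ⟪θstar - θh ω, g m i ω⟫_ℝ) P :=
      fun m => (integrable_finset_sum _ fun i hi => hip0int m i hi).const_mul _
    have hmidint : Integrable
        (fun ω => ∑ m, w m * ∑ i ∈ Icc 1 τ, ⟪θstar - θh ω, g m i ω⟫_ℝ) P :=
      integrable_finset_sum _ fun m _ => hmid m
    calc ∫ ω, ‖θplus ω - θstar‖ ^ 2 ∂P
        = ∫ ω, (‖θh ω - θstar‖ ^ 2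
            + 2 * η * (∑ m, w m * ∑ i ∈ Icc 1 τ, ⟪θstar - θh ω, g m i ω⟫_ℝ)
            + η ^ 2 * ‖S ω‖ ^ 2) ∂P := by simp only [hpt]
      _ = (∫ ω, (‖θh ω - θstar‖ ^ 2
              + 2 * η * (∑ m, w m * ∑ i ∈ Icc 1 τ, ⟪θstar - θh ω, g m i ω⟫_ℝ)) ∂P)
            + ∫ ω, η ^ 2 * ‖S ω‖ ^ 2 ∂P :=
          integral_add (hθh2int.add (hmidint.const_mul _)) (hS2int.const_mul _)
      _ = ((∫ ω, ‖θh ω - θstar‖ ^ 2 ∂P)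
            + ∫ ω, 2 * η * (∑ m, w m * ∑ i ∈ Icc 1 τ, ⟪θstar - θh ω, g m i ω⟫_ℝ) ∂P)
            + ∫ ω, η ^ 2 * ‖S ω‖ ^ 2 ∂P := by
          rw [integral_add hθh2int (hmidint.const_mul _)]
      _ = A + 2 * η * (∑ m, w m * ∑ i ∈ Icc 1 τ, ∫ ω, ⟪θstar - θh ω, g m i ω⟫_ℝ ∂P)
            + η ^ 2 * ∫ ω, ‖S ω‖ ^ 2 ∂P := by
          have hsum : ∫ ω, (∑ m, w m * ∑ i ∈ Icc 1 τ, ⟪θstar - θh ω, g m i ω⟫_ℝ) ∂P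
              = ∑ m, w m * ∑ i ∈ Icc 1 τ, ∫ ω, ⟪θstar - θh ω, g m i ω⟫_ℝ ∂P := by
            rw [integral_finset_sum _ (fun m _ => hmid m)]
            refine Finset.sum_congr rfl fun m _ => ?_
            rw [integral_const_mul, integral_finset_sum _ (fun i hi => hip0int m i hi)]
          rw [integral_const_mul, integral_const_mul, ← hA, hsum]
  -- bound on ∫‖S‖²
  have hISb : ∫ ω, ‖S ω‖ ^ 2 ∂P ≤ (τ:ℝ) ^ 2 * G ^ 2 := by
    refine (integral_mono hS2int hSbint hSptw).trans ?_
    rw [integral_finset_sum _ (fun m _ =>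
      ((integrable_finset_sum _ fun i hi => hg2int m i hi).const_mul _).const_mul _)]
    have hper : ∀ m : Fin M,
        ∫ ω, w m * ((τ:ℝ) * ∑ i ∈ Icc 1 τ, ‖g m i ω‖ ^ 2) ∂P
          ≤ w m * ((τ:ℝ) * ((τ:ℝ) * G ^ 2)) := by
      intro m
      rw [integral_const_mul, integral_const_mul,
        integral_finset_sum _ (fun i hi => hg2int m i hi)]
      refine mul_le_mul_of_nonneg_left (mul_le_mul_of_nonneg_left ?_ (by positivity)) (hw m)
      calc ∑ i ∈ Icc 1 τ, ∫ ω, ‖g m i ω‖ ^ 2 ∂P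
          ≤ ∑ _i ∈ Icc 1 τ, G ^ 2 := Finset.sum_le_sum fun i hi => hgbound m i hi
        _ = (τ:ℝ) * G ^ 2 := by rw [Finset.sum_const, nsmul_eq_mul, hcardτ]
    calc ∑ m, ∫ ω, w m * ((τ:ℝ) * ∑ i ∈ Icc 1 τ, ‖g m i ω‖ ^ 2) ∂P
        ≤ ∑ m, w m * ((τ:ℝ) * ((τ:ℝ) * G ^ 2)) := Finset.sum_le_sum fun m _ => hper m
      _ = (τ:ℝ) ^ 2 * G ^ 2 := by rw [← Finset.sum_mul, hw1]; ring
  -- split of the inner-product integral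
  have hipsplit : ∀ m, ∀ i ∈ Icc 1 τ,
      ∫ ω, ⟪θstar - θh ω, g m i ω⟫_ℝ ∂P
        = (∫ ω, ⟪θstar - θloc m i ω, g m i ω⟫_ℝ ∂P)
          + ∫ ω, ⟪θloc m i ω - θh ω, g m i ω⟫_ℝ ∂P := by
    intro m i hi
    have hcrossint : Integrable (fun ω => ⟪θloc m i ω - θh ω, g m i ω⟫_ℝ) P := by
      have he : (fun ω => ⟪θloc m i ω - θh ω, g m i ω⟫_ℝ)
          = fun ω => ⟪θstar - θh ω, g m i ω⟫_ℝ - ⟪θstar - θloc m i ω, g m i ω⟫_ℝ := by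
        funext ω
        rw [← inner_sub_left]
        congr 1
        abel
      rw [he]
      exact (hip0int m i hi).sub (hip1int m i hi)
    have hptw : ∀ ω, ⟪θstar - θh ω, g m i ω⟫_ℝ
        = ⟪θstar - θloc m i ω, g m i ω⟫_ℝ + ⟪θloc m i ω - θh ω, g m i ω⟫_ℝ := by
      intro ω
      rw [← inner_add_left]
      congr 1
      abel
    calc ∫ ω, ⟪θstar - θh ω, g m i ω⟫_ℝ ∂P
        = ∫ ω, (⟪θstar - θloc m i ω, g m i ω⟫_ℝ + ⟪θloc m i ω - θh ω, g m i ω⟫_ℝ) ∂P := by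
          simp only [hptw]
      _ = _ := integral_add (hip1int m i hi) hcrossint
  -- cross-term bound for i ≥ 2
  have hcross : ∀ m, ∀ i ∈ Icc 2 τ,
      ∫ ω, ⟪θloc m i ω - θh ω, g m i ω⟫_ℝ ∂P
        ≤ η / 2 * (((i:ℝ) - 1) ^ 2 * G ^ 2 + G ^ 2) := by
    intro m i hi
    have hiτ : i ∈ Icc 1 τ := by
      simp only [mem_Icc] at hi ⊢
      omega
    have hcrossint : Integrable (fun ω => ⟪θloc m i ω - θh ω, g m i ω⟫_ℝ) P := by
      have he : (fun ω => ⟪θloc m i ω - θh ω, g m i ω⟫_ℝ)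
          = fun ω => ⟪θstar - θh ω, g m i ω⟫_ℝ - ⟪θstar - θloc m i ω, g m i ω⟫_ℝ := by
        funext ω
        rw [← inner_sub_left]
        congr 1
        abel
      rw [he]
      exact (hip0int m i hiτ).sub (hip1int m i hiτ)
    have hptw : ∀ ω, ⟪θloc m i ω - θh ω, g m i ω⟫_ℝ
        ≤ η / 2 * (‖∑ j ∈ Icc 1 (i-1), g m j ω‖ ^ 2 + ‖g m i ω‖ ^ 2) := by
      intro ω
      have hd : θloc m i ω - θh ω = -(η • ∑ j ∈ Icc 1 (i-1), g m j ω) := by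
        rw [hθloc]
        abel
      rw [hd, inner_neg_left, real_inner_smul_left]
      have habs := abs_real_inner_le_norm (∑ j ∈ Icc 1 (i-1), g m j ω) (g m i ω)
      nlinarith [sq_nonneg (‖∑ j ∈ Icc 1 (i-1), g m j ω‖ - ‖g m i ω‖), hη0.le,
        mul_nonneg hη0.le (sq_nonneg (‖∑ j ∈ Icc 1 (i-1), g m j ω‖ - ‖g m i ω‖)),
        mul_le_mul_of_nonneg_left
          ((neg_le_abs ⟪∑ j ∈ Icc 1 (i-1), g m j ω, g m i ω⟫_ℝ).trans habs) hη0.le]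
    have e1 : ∫ ω, η / 2 * (‖∑ j ∈ Icc 1 (i-1), g m j ω‖ ^ 2 + ‖g m i ω‖ ^ 2) ∂P
        = η / 2 * ((∫ ω, ‖∑ j ∈ Icc 1 (i-1), g m j ω‖ ^ 2 ∂P) + ∫ ω, ‖g m i ω‖ ^ 2 ∂P) := by
      rw [integral_const_mul]
      congr 1
      exact integral_add (hb2int i hiτ m) (hg2int m i hiτ)
    calc ∫ ω, ⟪θloc m i ω - θh ω, g m i ω⟫_ℝ ∂P
        ≤ ∫ ω, η / 2 * (‖∑ j ∈ Icc 1 (i-1), g m j ω‖ ^ 2 + ‖g m i ω‖ ^ 2) ∂P :=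
          integral_mono hcrossint
            (((hb2int i hiτ m).add (hg2int m i hiτ)).const_mul (η/2)) hptw
      _ = η / 2 * ((∫ ω, ‖∑ j ∈ Icc 1 (i-1), g m j ω‖ ^ 2 ∂P) + ∫ ω, ‖g m i ω‖ ^ 2 ∂P) := e1
      _ ≤ η / 2 * (((i:ℝ) - 1) ^ 2 * G ^ 2 + G ^ 2) := by
          nlinarith [hbbound i hiτ m, hgbound m i hiτ, hη0.le]
  -- strong convexity + unbiasedness bound for i ≥ 2
  have hinner2 : ∀ m, ∀ i ∈ Icc 2 τ,
      ∫ ω, ⟪θstar - θloc m i ω, g m i ω⟫_ℝ ∂P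
        ≤ (F m θstar - Fmin m) - μ / 2 * ((1 - η) * A - η * (1 - η) * ((i:ℝ)-1)^2 * G^2) := by
    intro m i hi
    have hiτ : i ∈ Icc 1 τ := by
      simp only [mem_Icc] at hi ⊢
      omega
    rw [hunbiased m i hiτ]
    have hsc' : ∀ ω, ⟪θstar - θloc m i ω, Gm m (θloc m i ω)⟫_ℝ
        ≤ (F m θstar - Fmin m) - μ / 2 * ‖θloc m i ω - θstar‖ ^ 2 := by
      intro ω
      have h := hsc m θstar (θloc m i ω)
      rw [norm_sub_rev θstar (θloc m i ω)] at h
      have h2 := hFmin m (θloc m i ω)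
      nlinarith
    have hstep1 : ∫ ω, ⟪θstar - θloc m i ω, Gm m (θloc m i ω)⟫_ℝ ∂P
        ≤ (F m θstar - Fmin m) - μ / 2 * ∫ ω, ‖θloc m i ω - θstar‖ ^ 2 ∂P := by
      calc ∫ ω, ⟪θstar - θloc m i ω, Gm m (θloc m i ω)⟫_ℝ ∂P
          ≤ ∫ ω, ((F m θstar - Fmin m) - μ / 2 * ‖θloc m i ω - θstar‖ ^ 2) ∂P :=
            integral_mono (hip2int m i hiτ)
              ((integrable_const _).sub ((hloc2int m i hiτ).const_mul (μ/2))) hsc'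
        _ = (∫ _ω, (F m θstar - Fmin m : ℝ) ∂P)
              - ∫ ω, μ / 2 * ‖θloc m i ω - θstar‖ ^ 2 ∂P :=
            integral_sub (integrable_const _) ((hloc2int m i hiτ).const_mul _)
        _ = (F m θstar - Fmin m) - μ / 2 * ∫ ω, ‖θloc m i ω - θstar‖ ^ 2 ∂P := by
            rw [integral_const, integral_const_mul, probReal_univ, one_smul]
    have hlow : (1-η) * A - η * (1-η) * ((i:ℝ)-1) ^ 2 * G ^ 2
        ≤ ∫ ω, ‖θloc m i ω - θstar‖ ^ 2 ∂P := by
      have hptw : ∀ ω, (1-η) * ‖θh ω - θstar‖ ^ 2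
          - η * (1-η) * ‖∑ j ∈ Icc 1 (i-1), g m j ω‖ ^ 2
          ≤ ‖θloc m i ω - θstar‖ ^ 2 := by
        intro ω
        have hd : θloc m i ω - θstar = (θh ω - θstar) - η • (∑ j ∈ Icc 1 (i-1), g m j ω) := by
          rw [hθloc]
          abel
        rw [hd]
        conv_rhs => rw [norm_sub_sq_real, real_inner_smul_right, norm_smul,
          Real.norm_eq_abs, abs_of_pos hη0, mul_pow]
        have habs := abs_real_inner_le_norm (θh ω - θstar) (∑ j ∈ Icc 1 (i-1), g m j ω)
        have hle := le_abs_self ⟪θh ω - θstar, ∑ j ∈ Icc 1 (i-1), g m j ω⟫_ℝ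
        nlinarith [mul_nonneg hη0.le (sq_nonneg (‖θh ω - θstar‖ - ‖∑ j ∈ Icc 1 (i-1), g m j ω‖)),
          mul_le_mul_of_nonneg_left (hle.trans habs) hη0.le]
      have h1 : (∫ ω, ((1-η) * ‖θh ω - θstar‖ ^ 2
            - η * (1-η) * ‖∑ j ∈ Icc 1 (i-1), g m j ω‖ ^ 2) ∂P)
          ≤ ∫ ω, ‖θloc m i ω - θstar‖ ^ 2 ∂P :=
        integral_mono
          ((hθh2int.const_mul (1-η)).sub ((hb2int i hiτ m).const_mul (η*(1-η))))
          (hloc2int m i hiτ) hptw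
      have h2 : ∫ ω, ((1-η) * ‖θh ω - θstar‖ ^ 2
            - η * (1-η) * ‖∑ j ∈ Icc 1 (i-1), g m j ω‖ ^ 2) ∂P
          = (1-η) * A - η * (1-η) * ∫ ω, ‖∑ j ∈ Icc 1 (i-1), g m j ω‖ ^ 2 ∂P := by
        rw [integral_sub (hθh2int.const_mul _) ((hb2int i hiτ m).const_mul _),
          integral_const_mul, integral_const_mul, ← hA]
      rw [h2] at h1
      have h3 := hbbound i hiτ m
      nlinarith [mul_le_mul_of_nonneg_left h3 (mul_nonneg hη0.le hη1')]
    have h3 : μ / 2 * ((1-η) * A - η * (1-η) * ((i:ℝ)-1) ^ 2 * G ^ 2)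
        ≤ μ / 2 * ∫ ω, ‖θloc m i ω - θstar‖ ^ 2 ∂P :=
      mul_le_mul_of_nonneg_left hlow (by positivity)
    linarith
  -- i = 1 bound
  have hi1 : ∑ m, w m * ∫ ω, ⟪θstar - θh ω, g m 1 ω⟫_ℝ ∂P ≤ -(μ / 2) * A := by
    have hunb1 : ∀ m : Fin M, ∫ ω, ⟪θstar - θh ω, g m 1 ω⟫_ℝ ∂P
        = ∫ ω, ⟪θstar - θh ω, Gm m (θh ω)⟫_ℝ ∂P := by
      intro m
      have h1 := hunbiased m 1 h1mem
      have e1 : (fun ω => ⟪θstar - θloc m 1 ω, g m 1 ω⟫_ℝ)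
          = fun ω => ⟪θstar - θh ω, g m 1 ω⟫_ℝ := by
        funext ω
        rw [hloc1]
      have e2 : (fun ω => ⟪θstar - θloc m 1 ω, Gm m (θloc m 1 ω)⟫_ℝ)
          = fun ω => ⟪θstar - θh ω, Gm m (θh ω)⟫_ℝ := by
        funext ω
        rw [hloc1]
      rw [e1, e2] at h1
      exact h1
    have hint2 : ∀ m : Fin M, Integrable (fun ω => ⟪θstar - θh ω, Gm m (θh ω)⟫_ℝ) P := by
      intro m
      have e2 : (fun ω => ⟪θstar - θloc m 1 ω, Gm m (θloc m 1 ω)⟫_ℝ)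
          = fun ω => ⟪θstar - θh ω, Gm m (θh ω)⟫_ℝ := by
        funext ω
        rw [hloc1]
      have := hip2int m 1 h1mem
      rwa [e2] at this
    simp only [hunb1]
    have hsum : ∑ m, w m * ∫ ω, ⟪θstar - θh ω, Gm m (θh ω)⟫_ℝ ∂P
        = ∫ ω, ∑ m, w m * ⟪θstar - θh ω, Gm m (θh ω)⟫_ℝ ∂P := by
      rw [integral_finset_sum _ (fun m _ => (hint2 m).const_mul (w m))]
      exact Finset.sum_congr rfl fun m _ => (integral_const_mul _ _).symm
    rw [hsum]
    have hptw : ∀ ω, ∑ m, w m * ⟪θstar - θh ω, Gm m (θh ω)⟫_ℝ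
        ≤ -(μ / 2) * ‖θh ω - θstar‖ ^ 2 := by
      intro ω
      have hm := hmin (θh ω)
      have hterm : ∀ m : Fin M, w m * ⟪θstar - θh ω, Gm m (θh ω)⟫_ℝ
          ≤ w m * F m θstar - w m * F m (θh ω) - w m * (μ / 2 * ‖θh ω - θstar‖ ^ 2) := by
        intro m
        have h := hsc m θstar (θh ω)
        rw [norm_sub_rev θstar (θh ω)] at h
        have h2 : ⟪θstar - θh ω, Gm m (θh ω)⟫_ℝ
            ≤ (F m θstar - F m (θh ω)) - μ / 2 * ‖θh ω - θstar‖ ^ 2 := by nlinarith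
        calc w m * ⟪θstar - θh ω, Gm m (θh ω)⟫_ℝ
            ≤ w m * ((F m θstar - F m (θh ω)) - μ / 2 * ‖θh ω - θstar‖ ^ 2) :=
              mul_le_mul_of_nonneg_left h2 (hw m)
          _ = _ := by ring
      calc ∑ m, w m * ⟪θstar - θh ω, Gm m (θh ω)⟫_ℝ
          ≤ ∑ m, (w m * F m θstar - w m * F m (θh ω) - w m * (μ / 2 * ‖θh ω - θstar‖ ^ 2)) :=
            Finset.sum_le_sum fun m _ => hterm m
        _ = (∑ m, w m * F m θstar) - (∑ m, w m * F m (θh ω))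
              - (∑ m, w m) * (μ / 2 * ‖θh ω - θstar‖ ^ 2) := by
            rw [Finset.sum_sub_distrib, Finset.sum_sub_distrib, ← Finset.sum_mul]
        _ ≤ -(μ / 2) * ‖θh ω - θstar‖ ^ 2 := by
            rw [hw1]
            linarith [hm]
    calc ∫ ω, ∑ m, w m * ⟪θstar - θh ω, Gm m (θh ω)⟫_ℝ ∂P
        ≤ ∫ ω, -(μ / 2) * ‖θh ω - θstar‖ ^ 2 ∂P :=
          integral_mono (integrable_finset_sum _ fun m _ => (hint2 m).const_mul (w m))
            (hθh2int.const_mul _) hptw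
      _ = -(μ / 2) * A := by rw [integral_const_mul, ← hA]
  -- assemble the bound on T
  have hTb : (∑ m, w m * ∑ i ∈ Icc 1 τ, ∫ ω, ⟪θstar - θh ω, g m i ω⟫_ℝ ∂P)
      ≤ -(μ / 2) * A + ((τ:ℝ) - 1) * (Γ - μ / 2 * (1 - η) * A)
        + ((μ / 2 * η * (1 - η) * G ^ 2 + η / 2 * G ^ 2)
            * ((τ:ℝ) * ((τ:ℝ) - 1) * (2 * (τ:ℝ) - 1) / 6)
          + η / 2 * G ^ 2 * ((τ:ℝ) - 1)) := by
    have hsplitIcc : Icc 1 τ = insert 1 (Icc 2 τ) := by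
      ext x
      simp only [mem_Icc, mem_insert]
      omega
    have h1not : (1:ℕ) ∉ Icc 2 τ := by simp
    have hcard2 : ((Icc 2 τ).card : ℝ) = (τ:ℝ) - 1 := by
      rw [Nat.card_Icc]
      have he : τ + 1 - 2 = τ - 1 := by omega
      rw [he, Nat.cast_sub hτ]
      norm_num
    have hpart : ∀ m : Fin M, ∑ i ∈ Icc 2 τ, ∫ ω, ⟪θstar - θh ω, g m i ω⟫_ℝ ∂P
        ≤ ((τ:ℝ)-1) * (F m θstar - Fmin m - μ / 2 * (1-η) * A)
          + ((μ / 2 * η * (1 - η) * G ^ 2 + η / 2 * G ^ 2)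
              * ((τ:ℝ) * ((τ:ℝ) - 1) * (2 * (τ:ℝ) - 1) / 6)
            + η / 2 * G ^ 2 * ((τ:ℝ) - 1)) := by
      intro m
      have hsub : ∀ i ∈ Icc 2 τ, i ∈ Icc 1 τ := by
        intro i hi
        simp only [mem_Icc] at hi ⊢
        omega
      calc ∑ i ∈ Icc 2 τ, ∫ ω, ⟪θstar - θh ω, g m i ω⟫_ℝ ∂P
          = ∑ i ∈ Icc 2 τ, ((∫ ω, ⟪θstar - θloc m i ω, g m i ω⟫_ℝ ∂P)
              + ∫ ω, ⟪θloc m i ω - θh ω, g m i ω⟫_ℝ ∂P) :=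
            Finset.sum_congr rfl fun i hi => hipsplit m i (hsub i hi)
        _ ≤ ∑ i ∈ Icc 2 τ, (((F m θstar - Fmin m)
              - μ / 2 * ((1 - η) * A - η * (1 - η) * ((i:ℝ)-1)^2 * G^2))
              + η / 2 * (((i:ℝ) - 1) ^ 2 * G ^ 2 + G ^ 2)) :=
            Finset.sum_le_sum fun i hi => add_le_add (hinner2 m i hi) (hcross m i hi)
        _ = ∑ i ∈ Icc 2 τ, ((F m θstar - Fmin m - μ / 2 * (1-η) * A + η / 2 * G ^ 2)
              + (μ / 2 * η * (1 - η) * G ^ 2 + η / 2 * G ^ 2) * ((i:ℝ)-1)^2) :=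
            Finset.sum_congr rfl fun i _ => by ring
        _ = ((τ:ℝ)-1) * (F m θstar - Fmin m - μ / 2 * (1-η) * A + η / 2 * G ^ 2)
              + (μ / 2 * η * (1 - η) * G ^ 2 + η / 2 * G ^ 2)
                * ((τ:ℝ) * ((τ:ℝ) - 1) * (2 * (τ:ℝ) - 1) / 6) := by
            rw [Finset.sum_add_distrib, Finset.sum_const, ← Finset.mul_sum,
              aux_sum_sq_Icc, nsmul_eq_mul, hcard2]
        _ = _ := by ring
    calc (∑ m, w m * ∑ i ∈ Icc 1 τ, ∫ ω, ⟪θstar - θh ω, g m i ω⟫_ℝ ∂P)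
        = (∑ m, w m * ∫ ω, ⟪θstar - θh ω, g m 1 ω⟫_ℝ ∂P)
          + ∑ m, w m * ∑ i ∈ Icc 2 τ, ∫ ω, ⟪θstar - θh ω, g m i ω⟫_ℝ ∂P := by
          rw [hsplitIcc]
          simp only [Finset.sum_insert h1not, mul_add, Finset.sum_add_distrib]
      _ ≤ -(μ / 2) * A + ∑ m, w m * (((τ:ℝ)-1) * (F m θstar - Fmin m - μ / 2 * (1-η) * A)
            + ((μ / 2 * η * (1 - η) * G ^ 2 + η / 2 * G ^ 2)
                * ((τ:ℝ) * ((τ:ℝ) - 1) * (2 * (τ:ℝ) - 1) / 6)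
              + η / 2 * G ^ 2 * ((τ:ℝ) - 1))) :=
          add_le_add hi1 (Finset.sum_le_sum fun m _ =>
            mul_le_mul_of_nonneg_left (hpart m) (hw m))
      _ = _ := by
          have hCC : ∑ m, w m * (((τ:ℝ)-1) * (F m θstar - Fmin m - μ / 2 * (1-η) * A)
              + ((μ / 2 * η * (1 - η) * G ^ 2 + η / 2 * G ^ 2)
                  * ((τ:ℝ) * ((τ:ℝ) - 1) * (2 * (τ:ℝ) - 1) / 6)
                + η / 2 * G ^ 2 * ((τ:ℝ) - 1)))
              = ((τ:ℝ)-1) * ((∑ m, w m * F m θstar) - (∑ m, w m * Fmin m)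
                  - μ / 2 * (1-η) * A)
                + ((μ / 2 * η * (1 - η) * G ^ 2 + η / 2 * G ^ 2)
                    * ((τ:ℝ) * ((τ:ℝ) - 1) * (2 * (τ:ℝ) - 1) / 6)
                  + η / 2 * G ^ 2 * ((τ:ℝ) - 1)) := by
            set CC : ℝ := (μ / 2 * η * (1 - η) * G ^ 2 + η / 2 * G ^ 2)
                * ((τ:ℝ) * ((τ:ℝ) - 1) * (2 * (τ:ℝ) - 1) / 6)
              + η / 2 * G ^ 2 * ((τ:ℝ) - 1) with hCCdef
            calc ∑ m, w m * (((τ:ℝ)-1) * (F m θstar - Fmin m - μ / 2 * (1-η) * A) + CC)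
                = ∑ m, (((τ:ℝ)-1) * (w m * F m θstar) - ((τ:ℝ)-1) * (w m * Fmin m)
                    - w m * (((τ:ℝ)-1) * (μ / 2 * (1-η) * A)) + w m * CC) :=
                  Finset.sum_congr rfl fun m _ => by ring
              _ = ((τ:ℝ)-1) * (∑ m, w m * F m θstar) - ((τ:ℝ)-1) * (∑ m, w m * Fmin m)
                    - (∑ m, w m) * (((τ:ℝ)-1) * (μ / 2 * (1-η) * A)) + (∑ m, w m) * CC := by
                  rw [Finset.sum_add_distrib, Finset.sum_sub_distrib, Finset.sum_sub_distrib,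
                    ← Finset.mul_sum, ← Finset.mul_sum, ← Finset.sum_mul, ← Finset.sum_mul]
              _ = _ := by rw [hw1]; ring
          rw [hCC, ← hFstar, hΓ]
          ring
  -- final combination
  rw [hIexp]
  have hAnn : 2 * η * (∑ m, w m * ∑ i ∈ Icc 1 τ, ∫ ω, ⟪θstar - θh ω, g m i ω⟫_ℝ ∂P)
      ≤ 2 * η * (-(μ / 2) * A + ((τ:ℝ) - 1) * (Γ - μ / 2 * (1 - η) * A)
        + ((μ / 2 * η * (1 - η) * G ^ 2 + η / 2 * G ^ 2)
            * ((τ:ℝ) * ((τ:ℝ) - 1) * (2 * (τ:ℝ) - 1) / 6)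
          + η / 2 * G ^ 2 * ((τ:ℝ) - 1))) :=
    mul_le_mul_of_nonneg_left hTb (by positivity)
  have hSnn : η ^ 2 * ∫ ω, ‖S ω‖ ^ 2 ∂P ≤ η ^ 2 * ((τ:ℝ) ^ 2 * G ^ 2) :=
    mul_le_mul_of_nonneg_left hISb (by positivity)
  nlinarith [hAnn, hSnn]
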